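/- Let μ, λ, κ be cardinals with μ and λ infinite, let S be the set of finite-support points of A(μ)^κ, and let f be a continuous map from A(μ)^κ into a Hausdorff space Y with w(Y) ≤ λ. Then |f[S]| ≤ λ. -/

import Mathlib

open Cardinal Set Function

universe u

noncomputable section

/-- The density of a topological space: least cardinality of a dense subset. -/
def tdensity (X : Type u) [TopologicalSpace X] : Cardinal.{u} :=
  sInf {c : Cardinal.{u} | ∃ s : Set X, Dense s ∧ #s = c}

/-- The weight of a topological space: least cardinality of a base. -/
def tweight (X : Type u) [TopologicalSpace X] : Cardinal.{u} :=
  sInf {c : Cardinal.{u} | ∃ B : Set (Set X), TopologicalSpace.IsTopologicalBasis B ∧ #B = c}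

/-- The π-weight: least cardinality of a π-base. -/
def piWeight (X : Type u) [TopologicalSpace X] : Cardinal.{u} :=
  sInf {c : Cardinal.{u} | ∃ B : Set (Set X),
    (∀ U ∈ B, IsOpen U ∧ U.Nonempty) ∧
    (∀ V : Set X, IsOpen V → V.Nonempty → ∃ U ∈ B, U ⊆ V) ∧ #B = c}

/-- ĉ(X): the least cardinal κ such that X has no pairwise disjoint family of κ
nonempty open sets. -/
def hatCell (X : Type u) [TopologicalSpace X] : Cardinal.{u} :=
  sInf {c : Cardinal.{u} | ¬ ∃ 𝒰 : Set (Set X),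
    (∀ U ∈ 𝒰, IsOpen U ∧ U.Nonempty) ∧ 𝒰.PairwiseDisjoint id ∧ #𝒰 = c}

/-- `H` is a closed G_λ set: closed and the intersection of at most λ open sets. -/
def IsClosedGLambda (lam : Cardinal.{u}) {X : Type u} [TopologicalSpace X] (H : Set X) : Prop :=
  IsClosed H ∧ ∃ 𝒰 : Set (Set X), (∀ U ∈ 𝒰, IsOpen U) ∧ #𝒰 ≤ lam ∧ H = ⋂₀ 𝒰

/-- X ∈ Γ(λ): every closed G_λ set has density ≤ λ. -/
def InGamma (lam : Cardinal.{u}) (X : Type u) [TopologicalSpace X] : Prop :=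
  ∀ H : Set X, IsClosedGLambda lam H → tdensity ↥H ≤ lam

/-- `S` witnesses `X ∈ Δ(λ)`. -/
def DeltaWitness (lam : Cardinal.{u}) (X : Type u) [TopologicalSpace X] (S : Set X) : Prop :=
  Dense S ∧
  (∀ T : Set X, T ⊆ S → #T < lam → tweight ↥(closure T) < lam) ∧
  (∀ (Y : Type u) (_ : TopologicalSpace Y), T2Space Y → ∀ f : X → Y,
     Continuous f → Surjective f → tweight Y = lam → #(f '' S) = lam)

/-- X ∈ Δ(λ). -/
def InDelta (lam : Cardinal.{u}) (X : Type u) [TopologicalSpace X] : Prop :=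
  lam ≤ tweight X ∧ ∃ S : Set X, DeltaWitness lam X S

/-- A canonical discrete space of cardinality `c`. -/
instance (c : Cardinal.{u}) : TopologicalSpace c.out := ⊥

instance (c : Cardinal.{u}) : DiscreteTopology c.out := ⟨rfl⟩

/-- A(μ): one-point compactification of a discrete space of cardinality μ. -/
def ACompact (μ : Cardinal.{u}) : Type u := OnePoint μ.out

instance (μ : Cardinal.{u}) : TopologicalSpace (ACompact μ) :=
  inferInstanceAs (TopologicalSpace (OnePoint μ.out))

/-- A(μ)^κ. -/
def APow (μ κ : Cardinal.{u}) : Type u := κ.out → ACompact μ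

instance (μ κ : Cardinal.{u}) : TopologicalSpace (APow μ κ) :=
  inferInstanceAs (TopologicalSpace (κ.out → ACompact μ))

/-- The set of finite-support points of A(μ)^κ. -/
def finSupport (μ κ : Cardinal.{u}) : Set (APow μ κ) :=
  {x | {ξ | x ξ ≠ (OnePoint.infty : OnePoint μ.out)}.Finite}

/-- X is polyadic: a continuous image of some A(μ)^κ. -/
def IsPolyadic (X : Type u) [TopologicalSpace X] : Prop :=
  ∃ μ κ : Cardinal.{u}, ℵ₀ ≤ μ ∧ ∃ f : APow μ κ → X, Continuous f ∧ Surjective f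

section Aux
open Filter TopologicalSpace OnePoint
namespace Stmt12

variable {α : Type u}

open Classical in
/-- Collapse values outside `S` to `∞`. -/
def collapse (S : Set α) : OnePoint α → OnePoint α :=
  fun a => Option.elim a OnePoint.infty (fun b => if b ∈ S then (b : OnePoint α) else OnePoint.infty)

@[simp] lemma collapse_infty (S : Set α) : collapse S (OnePoint.infty) = OnePoint.infty := rfl

lemma collapse_coe_mem {S : Set α} {b : α} (hb : b ∈ S) :
    collapse S (b : OnePoint α) = (b : OnePoint α) := by
  simp only [collapse, Option.elim]
  exact if_pos hb

lemma collapse_coe_not_mem {S : Set α} {b : α} (hb : b ∉ S) :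
    collapse S (b : OnePoint α) = OnePoint.infty := by
  simp only [collapse, Option.elim]
  exact if_neg hb

lemma collapse_comp {M N : Set α} (h : M ⊆ N) (a : OnePoint α) :
    collapse M (collapse N a) = collapse M a := by
  induction a using OnePoint.rec with
  | infty => simp
  | coe b =>
    by_cases hb : b ∈ N
    · rw [collapse_coe_mem hb]
    · rw [collapse_coe_not_mem hb, collapse_infty,
        collapse_coe_not_mem (fun hm => hb (h hm))]

lemma eq_of_collapse_eq {a b : OnePoint α}
    (h : ∀ M : Finset α, collapse (↑M) a = collapse (↑M) b) : a = b := by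
  classical
  induction a using OnePoint.rec with
  | infty =>
    induction b using OnePoint.rec with
    | infty => rfl
    | coe y =>
      have hx := h {y}
      rw [collapse_infty, collapse_coe_mem (by simp)] at hx
      exact absurd hx.symm (OnePoint.coe_ne_infty y)
  | coe x =>
    have hx := h {x}
    rw [collapse_coe_mem (by simp)] at hx
    induction b using OnePoint.rec with
    | infty => rw [collapse_infty] at hx; exact absurd hx (OnePoint.coe_ne_infty x)
    | coe y =>
      by_cases hy : y ∈ (↑({x} : Finset α) : Set α)
      · rw [collapse_coe_mem hy] at hx
        exact hx
      · rw [collapse_coe_not_mem hy] at hx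
        exact absurd hx (OnePoint.coe_ne_infty x)

lemma collapse_continuous [TopologicalSpace α] [DiscreteTopology α] (M : Finset α) :
    Continuous (collapse (↑M : Set α)) := by
  classical
  rw [OnePoint.continuous_iff_from_discrete]
  have hev : ∀ᶠ b in (cofinite : Filter α),
      (fun _ : α => (OnePoint.infty : OnePoint α)) b = collapse (↑M) (b : OnePoint α) := by
    apply (Set.Finite.eventually_cofinite_notMem (M.finite_toSet)).mono
    intro b hb
    rw [collapse_coe_not_mem hb]
  simpa [collapse_infty] using tendsto_const_nhds.congr' hev


variable {ι : Type u} [TopologicalSpace α] [DiscreteTopology α]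

example : T2Space (OnePoint α) := inferInstance
example : CompactSpace ((ι → OnePoint α) × (ι → OnePoint α)) := inferInstance

lemma sep {H K : Set (ι → OnePoint α)} (hH : IsClosed H) (hK : IsClosed K)
    (hd : Disjoint H K) :
    ∃ (E : Finset ι) (M : Finset α), ∀ x ∈ H, ∀ y ∈ K,
      ∃ ξ ∈ E, collapse (↑M) (x ξ) ≠ collapse (↑M) (y ξ) := by
  classical
  by_contra hcon
  push_neg at hcon
  set Z : Finset ι × Finset α → Set ((ι → OnePoint α) × (ι → OnePoint α)) := fun p =>
    {q | q.1 ∈ H ∧ q.2 ∈ K ∧ ∀ ξ ∈ p.1, collapse (↑p.2) (q.1 ξ) = collapse (↑p.2) (q.2 ξ)}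
    with hZdef
  have hclosed : ∀ p, IsClosed (Z p) := by
    intro p
    have h3 : IsClosed {q : (ι → OnePoint α) × (ι → OnePoint α) |
        ∀ ξ ∈ p.1, collapse (↑p.2) (q.1 ξ) = collapse (↑p.2) (q.2 ξ)} := by
      have heq : {q : (ι → OnePoint α) × (ι → OnePoint α) |
          ∀ ξ ∈ p.1, collapse (↑p.2) (q.1 ξ) = collapse (↑p.2) (q.2 ξ)} =
          ⋂ ξ ∈ p.1, {q : (ι → OnePoint α) × (ι → OnePoint α) |
            collapse (↑p.2) (q.1 ξ) = collapse (↑p.2) (q.2 ξ)} := by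
        ext q; simp
      rw [heq]
      refine isClosed_biInter fun ξ _ => isClosed_eq ?_ ?_
      · exact (collapse_continuous p.2).comp ((continuous_apply ξ).comp continuous_fst)
      · exact (collapse_continuous p.2).comp ((continuous_apply ξ).comp continuous_snd)
    have : Z p = ({q : (ι → OnePoint α) × (ι → OnePoint α) | q.1 ∈ H} ∩
        {q | q.2 ∈ K}) ∩ {q | ∀ ξ ∈ p.1, collapse (↑p.2) (q.1 ξ) = collapse (↑p.2) (q.2 ξ)} := by
      ext q; simp [hZdef, and_assoc]
    rw [this]
    exact ((hH.preimage continuous_fst).inter (hK.preimage continuous_snd)).inter h3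
  have hne : ∀ p, (Z p).Nonempty := by
    intro p
    obtain ⟨x, hx, y, hy, hagree⟩ := hcon p.1 p.2
    exact ⟨(x, y), hx, hy, hagree⟩
  have hdir : Directed (· ⊇ ·) Z := by
    intro p q
    refine ⟨(p.1 ∪ q.1, p.2 ∪ q.2), ?_, ?_⟩
    · rintro z ⟨h1, h2, h3⟩
      refine ⟨h1, h2, fun ξ hξ => ?_⟩
      have hMs : (↑p.2 : Set α) ⊆ (↑(p.2 ∪ q.2) : Set α) :=
        Finset.coe_subset.mpr Finset.subset_union_left
      have := h3 ξ (Finset.mem_union_left _ hξ)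
      calc collapse (↑p.2) (z.1 ξ) = collapse (↑p.2) (collapse (↑(p.2 ∪ q.2)) (z.1 ξ)) :=
            (collapse_comp hMs _).symm
        _ = collapse (↑p.2) (collapse (↑(p.2 ∪ q.2)) (z.2 ξ)) := by rw [this]
        _ = collapse (↑p.2) (z.2 ξ) := collapse_comp hMs _
    · rintro z ⟨h1, h2, h3⟩
      refine ⟨h1, h2, fun ξ hξ => ?_⟩
      have hMs : (↑q.2 : Set α) ⊆ (↑(p.2 ∪ q.2) : Set α) :=
        Finset.coe_subset.mpr Finset.subset_union_right
      have := h3 ξ (Finset.mem_union_right _ hξ)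
      calc collapse (↑q.2) (z.1 ξ) = collapse (↑q.2) (collapse (↑(p.2 ∪ q.2)) (z.1 ξ)) :=
            (collapse_comp hMs _).symm
        _ = collapse (↑q.2) (collapse (↑(p.2 ∪ q.2)) (z.2 ξ)) := by rw [this]
        _ = collapse (↑q.2) (z.2 ξ) := collapse_comp hMs _
  obtain ⟨q, hq⟩ := IsCompact.nonempty_iInter_of_directed_nonempty_isCompact_isClosed
    Z hdir hne (fun p => (hclosed p).isCompact) hclosed
  have hq1 : q.1 ∈ H := (mem_iInter.mp hq (∅, ∅)).1
  have hq2 : q.2 ∈ K := (mem_iInter.mp hq (∅, ∅)).2.1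
  have heq : q.1 = q.2 := by
    funext ξ
    refine eq_of_collapse_eq fun M => ?_
    exact (mem_iInter.mp hq ({ξ}, M)).2.2 ξ (Finset.mem_singleton_self ξ)
  exact absurd (heq ▸ hq2) (disjoint_left.mp hd hq1)



lemma basepair {X Y : Type u} [TopologicalSpace X] [TopologicalSpace Y] [T2Space Y]
    [CompactSpace X] {B : Set (Set Y)} (hB : IsTopologicalBasis B)
    {f : X → Y} (hf : Continuous f) {x y : X} (hxy : f x ≠ f y) :
    ∃ U ∈ B, ∃ V ∈ B, f x ∈ U ∧ f y ∈ V ∧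
      Disjoint (closure (f ⁻¹' U)) (closure (f ⁻¹' V)) := by
  have hKc : IsCompact (range f) := isCompact_range hf
  haveI : CompactSpace ↥(range f) := isCompact_iff_compactSpace.mp hKc
  set p : ↥(range f) := ⟨f x, mem_range_self x⟩
  set q : ↥(range f) := ⟨f y, mem_range_self y⟩
  have hpq : p ≠ q := fun h => hxy (congrArg Subtype.val h)
  obtain ⟨O₁, O₂, hO₁, hO₂, hpO₁, hqO₂, hOd⟩ := t2_separation hpq
  obtain ⟨C₁, hC₁n, hC₁c, hC₁s⟩ := exists_mem_nhds_isClosed_subset (hO₁.mem_nhds hpO₁)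
  obtain ⟨C₂, hC₂n, hC₂c, hC₂s⟩ := exists_mem_nhds_isClosed_subset (hO₂.mem_nhds hqO₂)
  have hCd : Disjoint C₁ C₂ := hOd.mono hC₁s hC₂s
  -- push to Y
  have hD₁c : IsCompact (Subtype.val '' C₁) := (hC₁c.isCompact).image continuous_subtype_val
  have hD₂c : IsCompact (Subtype.val '' C₂) := (hC₂c.isCompact).image continuous_subtype_val
  have hDd : Disjoint (Subtype.val '' C₁) (Subtype.val '' C₂) :=
    (Set.disjoint_image_iff Subtype.val_injective).mpr hCd
  -- open sets in Y inducing the interiors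
  obtain ⟨O₁', hO₁', hO₁'e⟩ := isOpen_induced_iff.mp (isOpen_interior (s := C₁))
  obtain ⟨O₂', hO₂', hO₂'e⟩ := isOpen_induced_iff.mp (isOpen_interior (s := C₂))
  have hpint : p ∈ interior C₁ := mem_interior_iff_mem_nhds.mpr hC₁n
  have hqint : q ∈ interior C₂ := mem_interior_iff_mem_nhds.mpr hC₂n
  have hpO₁' : f x ∈ O₁' := by rw [← hO₁'e] at hpint; exact hpint
  have hqO₂' : f y ∈ O₂' := by rw [← hO₂'e] at hqint; exact hqint
  obtain ⟨U, hUB, hxU, hUs⟩ := hB.exists_subset_of_mem_open hpO₁' hO₁'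
  obtain ⟨V, hVB, hyV, hVs⟩ := hB.exists_subset_of_mem_open hqO₂' hO₂'
  refine ⟨U, hUB, V, hVB, hxU, hyV, ?_⟩
  have h1 : closure (f ⁻¹' U) ⊆ f ⁻¹' (Subtype.val '' C₁) := by
    refine closure_minimal ?_ ((hD₁c.isClosed).preimage hf)
    intro z hz
    have hmem : (⟨f z, mem_range_self z⟩ : ↥(range f)) ∈ interior C₁ := by
      rw [← hO₁'e]; exact hUs hz
    exact ⟨⟨f z, mem_range_self z⟩, interior_subset hmem, rfl⟩
  have h2 : closure (f ⁻¹' V) ⊆ f ⁻¹' (Subtype.val '' C₂) := by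
    refine closure_minimal ?_ ((hD₂c.isClosed).preimage hf)
    intro z hz
    have hmem : (⟨f z, mem_range_self z⟩ : ↥(range f)) ∈ interior C₂ := by
      rw [← hO₂'e]; exact hVs hz
    exact ⟨⟨f z, mem_range_self z⟩, interior_subset hmem, rfl⟩
  exact (hDd.preimage f).mono h1 h2


end Stmt12

end Aux

open Filter TopologicalSpace OnePoint Stmt12 in
/-- the image of the finite-support points has cardinality ≤ λ. -/
theorem statement12 (μ lam κ : Cardinal.{u}) (hμ : ℵ₀ ≤ μ) (hlam : ℵ₀ ≤ lam)
    {Y : Type u} [TopologicalSpace Y] [T2Space Y] (hY : tweight Y ≤ lam)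
    (f : APow μ κ → Y) (hf : Continuous f) :
    #(f '' finSupport μ κ) ≤ lam := by
  classical
  -- a basis of `Y` of cardinality at most `lam`
  have hne : {c : Cardinal.{u} | ∃ B : Set (Set Y), IsTopologicalBasis B ∧ #B = c}.Nonempty :=
    ⟨#{U : Set Y | IsOpen U}, {U : Set Y | IsOpen U}, isTopologicalBasis_opens, rfl⟩
  obtain ⟨B, hB, hBc⟩ := csInf_mem hne
  have hBlam : #B ≤ lam := by rw [hBc]; exact hY
  haveI : CompactSpace (APow μ κ) := inferInstanceAs (CompactSpace (κ.out → OnePoint μ.out))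
  -- the set of "separated" pairs of basis elements
  set P : Set (Set Y × Set Y) :=
    {p | p.1 ∈ B ∧ p.2 ∈ B ∧ Disjoint (closure (f ⁻¹' p.1)) (closure (f ⁻¹' p.2))} with hPdef
  have hsep : ∀ p : P, ∃ (E : Finset κ.out) (M : Finset μ.out),
      ∀ x ∈ closure (f ⁻¹' (p : Set Y × Set Y).1),
        ∀ y ∈ closure (f ⁻¹' (p : Set Y × Set Y).2),
        ∃ ξ ∈ E, collapse (↑M) (x ξ) ≠ collapse (↑M) (y ξ) :=
    fun p => sep isClosed_closure isClosed_closure p.2.2.2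
  choose E M hEM using hsep
  set A : Set κ.out := ⋃ p : P, (↑(E p) : Set κ.out) with hAdef
  set Λ : Set μ.out := ⋃ p : P, (↑(M p) : Set μ.out) with hLdef
  set r : APow μ κ → APow μ κ :=
    fun x ξ => if ξ ∈ A then collapse Λ (x ξ) else OnePoint.infty with hrdef
  -- the key point: `f` factors through the retraction `r`
  have hkey : ∀ x, f (r x) = f x := by
    intro x
    by_contra hcontra
    obtain ⟨U, hU, V, hV, hxU, hrV, hd⟩ :=
      basepair hB hf (fun h => hcontra h.symm)
    have hp : (U, V) ∈ P := ⟨hU, hV, hd⟩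
    have hx1 : x ∈ closure (f ⁻¹' U) := subset_closure hxU
    have hx2 : r x ∈ closure (f ⁻¹' V) := subset_closure hrV
    obtain ⟨ξ, hξE, hne2⟩ := hEM ⟨(U, V), hp⟩ x hx1 (r x) hx2
    apply hne2
    have hξA : ξ ∈ A := mem_iUnion.mpr ⟨⟨(U, V), hp⟩, hξE⟩
    have hML : (↑(M ⟨(U, V), hp⟩) : Set μ.out) ⊆ Λ :=
      fun a ha => mem_iUnion.mpr ⟨⟨(U, V), hp⟩, ha⟩
    have hrx : r x ξ = collapse Λ (x ξ) := if_pos hξA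
    rw [hrx]; exact (collapse_comp hML (x ξ)).symm
  -- hence the image of the finite-support points equals the image of their retracts
  have himg : f '' finSupport μ κ ⊆ f '' (r '' finSupport μ κ) := by
    rintro y ⟨x, hx, rfl⟩
    exact ⟨r x, ⟨x, hx, rfl⟩, hkey x⟩
  refine le_trans (mk_le_mk_of_subset himg) (le_trans mk_image_le ?_)
  -- every retract of a finite-support point is a finite partial function `A → Λ`
  have hprop : ∀ t ∈ r '' finSupport μ κ, ∀ ξ : κ.out,
      t ξ = OnePoint.infty ∨ (ξ ∈ A ∧ ∃ a : μ.out, a ∈ Λ ∧ t ξ = (a : OnePoint μ.out)) := by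
    rintro t ⟨x, hx, rfl⟩ ξ
    by_cases hξ : ξ ∈ A
    · have ht : r x ξ = collapse Λ (x ξ) := if_pos hξ
      rw [ht]
      set v : OnePoint μ.out := x ξ with hv
      induction v using OnePoint.rec with
      | infty => left; rfl
      | coe b =>
        by_cases hb : b ∈ Λ
        · exact Or.inr ⟨hξ, b, hb, collapse_coe_mem hb⟩
        · left; exact collapse_coe_not_mem hb
    · left
      exact (if_neg hξ :
        (if ξ ∈ A then collapse Λ (x ξ) else OnePoint.infty) = OnePoint.infty)
  -- the "graph" of such a point, as a subset of `A × Λ`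
  set G : APow μ κ → Set (↥A × ↥Λ) :=
    fun t => {w | t (↑w.1) = ((↑w.2 : μ.out) : OnePoint μ.out)} with hGdef
  have hGfin : ∀ t ∈ r '' finSupport μ κ, (G t).Finite := by
    rintro t ⟨x, hx, rfl⟩
    refine Set.Finite.of_finite_image (f := fun w : ↥A × ↥Λ => (↑w.1 : κ.out)) ?_ ?_
    · refine Set.Finite.subset hx ?_
      rintro ξ ⟨w, hw, rfl⟩
      show x (↑w.1) ≠ OnePoint.infty
      intro hxi
      have hri : r x (↑w.1) = OnePoint.infty := by
        by_cases h : (↑w.1 : κ.out) ∈ A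
        · show (if (↑w.1 : κ.out) ∈ A then collapse Λ (x ↑w.1) else OnePoint.infty) = _
          rw [if_pos h, hxi]; simp
        · exact if_neg h
      rw [hw] at hri
      exact OnePoint.coe_ne_infty _ hri
    · rintro ⟨w1, a1⟩ h1 ⟨w2, a2⟩ h2 hEq
      have hw : w1 = w2 := Subtype.ext hEq
      subst hw
      have : ((↑a1 : μ.out) : OnePoint μ.out) = ((↑a2 : μ.out) : OnePoint μ.out) := by
        rw [← h1, ← h2]
      exact Prod.ext rfl (Subtype.ext (OnePoint.coe_injective this))
  -- the graph map is injective on the retracts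
  have hginj : ∀ t1 ∈ r '' finSupport μ κ, ∀ t2 ∈ r '' finSupport μ κ,
      G t1 = G t2 → t1 = t2 := by
    intro t1 ht1 t2 ht2 hG12
    funext ξ
    have key : ∀ s1 ∈ r '' finSupport μ κ, ∀ s2 ∈ r '' finSupport μ κ, G s1 = G s2 →
        ∀ a : μ.out, s1 ξ = (a : OnePoint μ.out) → s2 ξ = (a : OnePoint μ.out) := by
      intro s1 hs1 s2 hs2 hG a ha
      rcases hprop s1 hs1 ξ with hsinf | ⟨hξA, b, hbΛ, hb⟩
      · rw [ha] at hsinf; exact absurd hsinf (OnePoint.coe_ne_infty a)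
      · have hab : b = a := by
          rw [ha] at hb; exact (OnePoint.coe_injective hb.symm)
        subst hab
        have hw : (⟨⟨ξ, hξA⟩, ⟨b, hbΛ⟩⟩ : ↥A × ↥Λ) ∈ G s1 := hb
        rw [hG] at hw
        exact hw
    rcases hprop t1 ht1 ξ with h1 | ⟨hξA, a, haΛ, ha⟩
    · rcases hprop t2 ht2 ξ with h2 | ⟨hξA2, a2, haΛ2, ha2⟩
      · rw [h1, h2]
      · have := key t2 ht2 t1 ht1 hG12.symm a2 ha2
        rw [this, ha2]
    · rw [ha, key t1 ht1 t2 ht2 hG12 a ha]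
  -- therefore the retracts inject into the finite subsets of `A × Λ`
  have hcard1 : #(r '' finSupport μ κ) ≤ #(Finset (↥A × ↥Λ)) := by
    have hg : ∀ t : ↥(r '' finSupport μ κ), (G ↑t).Finite := fun t => hGfin ↑t t.2
    refine Cardinal.mk_le_of_injective (f := fun t : ↥(r '' finSupport μ κ) =>
      (hg t).toFinset) ?_
    intro t1 t2 h12
    apply Subtype.ext
    apply hginj ↑t1 t1.2 ↑t2 t2.2
    have := congrArg (fun s : Finset (↥A × ↥Λ) => (↑s : Set (↥A × ↥Λ))) h12
    simpa [Set.Finite.coe_toFinset] using this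
  refine le_trans hcard1 ?_
  -- cardinality bookkeeping
  have hP : #(↥P) ≤ lam := by
    have hinj : Injective (fun p : ↥P => ((⟨(↑p : Set Y × Set Y).1, p.2.1⟩ : ↥B),
        (⟨(↑p : Set Y × Set Y).2, p.2.2.1⟩ : ↥B))) := by
      intro p q h
      have h1 : (↑p : Set Y × Set Y).1 = (↑q : Set Y × Set Y).1 :=
        congrArg (fun z : ↥B × ↥B => (↑z.1 : Set Y)) h
      have h2 : (↑p : Set Y × Set Y).2 = (↑q : Set Y × Set Y).2 :=
        congrArg (fun z : ↥B × ↥B => (↑z.2 : Set Y)) h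
      exact Subtype.ext (Prod.ext h1 h2)
    refine le_trans (Cardinal.mk_le_of_injective hinj) ?_
    have : #(↥B × ↥B) = #(↥B) * #(↥B) := by
      simp [Cardinal.mk_prod]
    rw [this]
    calc #(↥B) * #(↥B) ≤ lam * lam := mul_le_mul' hBlam hBlam
      _ = lam := Cardinal.mul_eq_self hlam
  have hA : #(↥A) ≤ lam := by
    rw [hAdef]
    refine le_trans Cardinal.mk_iUnion_le_sum_mk ?_
    refine le_trans (Cardinal.sum_le_sum _ (fun _ => ℵ₀) ?_) ?_
    · intro p
      exact le_of_lt (Set.Finite.lt_aleph0 (E p).finite_toSet)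
    · rw [Cardinal.sum_const']
      calc #(↥P) * ℵ₀ ≤ lam * lam := mul_le_mul' hP hlam
        _ = lam := Cardinal.mul_eq_self hlam
  have hL : #(↥Λ) ≤ lam := by
    rw [hLdef]
    refine le_trans Cardinal.mk_iUnion_le_sum_mk ?_
    refine le_trans (Cardinal.sum_le_sum _ (fun _ => ℵ₀) ?_) ?_
    · intro p
      exact le_of_lt (Set.Finite.lt_aleph0 (M p).finite_toSet)
    · rw [Cardinal.sum_const']
      calc #(↥P) * ℵ₀ ≤ lam * lam := mul_le_mul' hP hlam
        _ = lam := Cardinal.mul_eq_self hlam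
  have hAL : #(↥A × ↥Λ) ≤ lam := by
    have : #(↥A × ↥Λ) = #(↥A) * #(↥Λ) := by
      simp [Cardinal.mk_prod]
    rw [this]
    calc #(↥A) * #(↥Λ) ≤ lam * lam := mul_le_mul' hA hL
      _ = lam := Cardinal.mul_eq_self hlam
  rcases finite_or_infinite (↥A × ↥Λ) with hfin | hinf
  · haveI : Fintype (↥A × ↥Λ) := Fintype.ofFinite _
    exact le_trans (le_of_lt (Cardinal.lt_aleph0_of_finite _)) hlam
  · rw [Cardinal.mk_finset_of_infinite]
    exact hAL
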